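/- Let m ≥ 1 and N ≥ 1, let n : Fin m → ℕ with ∑_j n j = N, and let Δ = gcd_j (n j). Let c : ZMod N be an element of additive order g. Then the number of colorings f : ZMod N → Fin m with fiber cardinalities n (i.e., |f⁻¹{j}| = n j for all j) satisfying f(x + c) = f(x) for all x equals P(n/g) = (N/g)! / ∏_j (n j / g)! if g ∣ Δ, and equals 0 otherwise. -/

import Mathlib

/-- A coloring of the regular `N`-gon in `m` colors with multiplicities `n`:
a function `f : ZMod N → Fin m` whose fiber over each color `j` has cardinality `n j`. -/
def IsColoring (N m : ℕ) (n : Fin m → ℕ) (f : ZMod N → Fin m) : Prop :=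
  ∀ j, Nat.card {x : ZMod N // f x = j} = n j

/-- Cyclic equivalence of colorings: one is obtained from the other by a rotation `x ↦ x + c`. -/
def cyclicSetoid (N m : ℕ) (n : Fin m → ℕ) :
    Setoid {f : ZMod N → Fin m // IsColoring N m n f} where
  r f g := ∃ c : ZMod N, ∀ x, (g : ZMod N → Fin m) x = (f : ZMod N → Fin m) (x + c)
  iseqv := by
    refine ⟨fun f => ⟨0, fun x => by rw [add_zero]⟩, ?_, ?_⟩
    · rintro f g ⟨c, h⟩
      exact ⟨-c, fun x => by rw [h, neg_add_cancel_right]⟩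
    · rintro f g k ⟨c, h1⟩ ⟨d, h2⟩
      exact ⟨d + c, fun x => by rw [h2, h1, add_assoc]⟩

/-- The number of cyclic necklaces: orbits of colorings under rotations. -/
noncomputable def gammaC (N m : ℕ) (n : Fin m → ℕ) : ℕ :=
  Nat.card (Quotient (cyclicSetoid N m n))

/-- Dihedral equivalence of colorings: one is obtained from the other by an element of
the subgroup of permutations of `ZMod N` generated by `x ↦ x + 1` and `x ↦ -x`. -/
def dihedralSetoid (N m : ℕ) (n : Fin m → ℕ) :
    Setoid {f : ZMod N → Fin m // IsColoring N m n f} where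
  r f g := ∃ σ ∈ Subgroup.closure
      ({Equiv.addRight (1 : ZMod N), Equiv.neg (ZMod N)} : Set (Equiv.Perm (ZMod N))),
      ∀ x, (g : ZMod N → Fin m) x = (f : ZMod N → Fin m) (σ x)
  iseqv := by
    refine ⟨fun f => ⟨1, one_mem _, fun x => rfl⟩, ?_, ?_⟩
    · rintro f g ⟨σ, hσ, h⟩
      exact ⟨σ⁻¹, inv_mem hσ, fun x => by rw [h]; exact congrArg (f : ZMod N → Fin m) (σ.apply_symm_apply x).symm⟩
    · rintro f g k ⟨σ, hσ, h1⟩ ⟨τ, hτ, h2⟩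
      exact ⟨σ * τ, mul_mem hσ hτ, fun x => by rw [h2, h1, Equiv.Perm.mul_apply]⟩

/-- The number of dihedral necklaces: orbits of colorings under rotations and reflections. -/
noncomputable def gammaD (N m : ℕ) (n : Fin m → ℕ) : ℕ :=
  Nat.card (Quotient (dihedralSetoid N m n))

theorem sigma_fst_card {ι : Type*} {α β : ι → Type*} :
    Nat.card {e : (Σ i, α i) ≃ (Σ i, β i) // ∀ x, (e x).1 = x.1} =
      Nat.card (∀ i, α i ≃ β i) := by
  symm
  apply Nat.card_eq_of_bijective
    (fun u => ⟨Equiv.sigmaCongrRight u, fun x => rfl⟩)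
  constructor
  · intro u v huv
    funext i
    ext a
    have huv' := congrArg Subtype.val huv
    have := congrArg (fun e => (e : (Σ i, α i) ≃ (Σ i, β i)) ⟨i, a⟩) huv'
    simpa using this
  · rintro ⟨e, he⟩
    have he' : ∀ y : Σ i, β i, (e.symm y).1 = y.1 := by
      intro y
      have := he (e.symm y)
      rw [e.apply_symm_apply] at this
      exact this.symm
    set G : ∀ x : Σ i, α i, β x.1 := fun x => (he x) ▸ (e x).2 with hG
    set G' : ∀ y : Σ i, β i, α y.1 := fun y => (he' y) ▸ (e.symm y).2 with hG'
    have key : ∀ x, e x = ⟨x.1, G x⟩ := by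
      intro x
      refine Sigma.ext (he x) ?_
      simp only [hG]
      exact (eqRec_heq _ _).symm
    have key' : ∀ y, e.symm y = ⟨y.1, G' y⟩ := by
      intro y
      refine Sigma.ext (he' y) ?_
      simp only [hG']
      exact (eqRec_heq _ _).symm
    refine ⟨fun i => ⟨fun a => G ⟨i, a⟩, fun b => G' ⟨i, b⟩, ?_, ?_⟩, ?_⟩
    · intro a
      have h0 : (⟨i, G ⟨i, a⟩⟩ : Σ i, β i) = e ⟨i, a⟩ := (key ⟨i, a⟩).symm
      have h1 : e.symm ⟨i, G ⟨i, a⟩⟩ = ⟨i, a⟩ := by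
        rw [h0, e.symm_apply_apply]
      have h2 := key' ⟨i, G ⟨i, a⟩⟩
      rw [h1] at h2
      exact (Sigma.mk.inj_iff.mp h2.symm).2.eq
    · intro b
      have h0 : (⟨i, G' ⟨i, b⟩⟩ : Σ i, α i) = e.symm ⟨i, b⟩ := (key' ⟨i, b⟩).symm
      have h1 : e ⟨i, G' ⟨i, b⟩⟩ = ⟨i, b⟩ := by
        rw [h0, e.apply_symm_apply]
      have h2 := key ⟨i, G' ⟨i, b⟩⟩
      rw [h1] at h2
      exact (Sigma.mk.inj_iff.mp h2.symm).2.eq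
    · apply Subtype.ext
      apply Equiv.ext
      rintro ⟨i, a⟩
      exact (key ⟨i, a⟩).symm

open Nat in
theorem card_fiber_colorings (m : ℕ) {α : Type*} [Fintype α] [DecidableEq α] (k : Fin m → ℕ)
    (hk : ∑ j, k j = Fintype.card α) :
    Nat.card {F : α → Fin m // ∀ j, Nat.card {x // F x = j} = k j} =
      Nat.multinomial Finset.univ k := by
  classical
  set β := Σ j : Fin m, Fin (k j) with hβ
  have hcardβ : Fintype.card β = Fintype.card α := by
    simp [hβ, Fintype.card_sigma, hk]
  obtain ⟨e0⟩ := Fintype.card_eq.mp hcardβ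
  -- card of equivs
  have hEq : Fintype.card (α ≃ β) = (Fintype.card α)! := by
    rw [Fintype.card_equiv e0.symm]
  set Φ : (α ≃ β) → (α → Fin m) := fun e a => (e a).1 with hΦ
  have hsum2 : Fintype.card (α ≃ β) = ∑ F : α → Fin m, Fintype.card {e : α ≃ β // Φ e = F} := by
    rw [Fintype.card_congr (Equiv.sigmaFiberEquiv Φ).symm, Fintype.card_sigma]
  -- fiber count
  have hfiber : ∀ F : α → Fin m,
      Fintype.card {e : α ≃ β // Φ e = F} =
        if (∀ j, Nat.card {x // F x = j} = k j) then ∏ j, (k j)! else 0 := by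
    intro F
    have hconj : {e : α ≃ β // Φ e = F} ≃
        {e : (Σ j, {a // F a = j}) ≃ β // ∀ x, (e x).1 = x.1} := by
      refine Equiv.subtypeEquiv (Equiv.equivCongr (Equiv.sigmaFiberEquiv F).symm (Equiv.refl β))
        ?_
      intro e
      constructor
      · rintro rfl
        rintro ⟨j, a, rfl⟩
        rfl
      · intro h
        funext a
        have := h ⟨F a, a, rfl⟩
        simpa [hΦ] using this
    have h2 : Fintype.card {e : α ≃ β // Φ e = F} =
        Nat.card (∀ j, {a // F a = j} ≃ Fin (k j)) := by
      rw [← Nat.card_eq_fintype_card, Nat.card_congr hconj, sigma_fst_card]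
    rw [h2, Nat.card_eq_fintype_card, Fintype.card_pi]
    by_cases hcond : ∀ j, Nat.card {x // F x = j} = k j
    · rw [if_pos hcond]
      refine Finset.prod_congr rfl fun j _ => ?_
      have : Fintype.card {a // F a = j} = k j := by
        rw [← Nat.card_eq_fintype_card]; exact hcond j
      obtain ⟨u⟩ := Fintype.card_eq.mp (by simp [this] : Fintype.card {a // F a = j} = Fintype.card (Fin (k j)))
      rw [Fintype.card_equiv u, this]
    · rw [if_neg hcond]
      push_neg at hcond
      obtain ⟨j0, hj0⟩ := hcond
      apply Finset.prod_eq_zero (Finset.mem_univ j0)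
      rw [Fintype.card_eq_zero_iff]
      constructor
      intro u
      exact hj0 (by rw [Nat.card_congr u, Nat.card_eq_fintype_card, Fintype.card_fin])
  -- combine
  have hmain : (Fintype.card α)! =
      Nat.card {F : α → Fin m // ∀ j, Nat.card {x // F x = j} = k j} * ∏ j, (k j)! := by
    rw [← hEq, hsum2]
    rw [Finset.sum_congr rfl fun F _ => hfiber F]
    rw [Finset.sum_ite, Finset.sum_const_zero, add_zero, Finset.sum_const, smul_eq_mul,
      Nat.card_eq_fintype_card, Fintype.card_subtype]
  have hspec := Nat.multinomial_spec Finset.univ k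
  rw [hk] at hspec
  have hpos : 0 < ∏ j, (k j)! := Finset.prod_pos fun j _ => Nat.factorial_pos _
  apply Nat.eq_of_mul_eq_mul_right hpos
  rw [← hmain, ← hspec, mul_comm]

/-- The number of colorings with multiplicities `n` fixed by the rotation `x ↦ x + c`,
where `c` has additive order `g`, is `P(n/g)` if `g ∣ Δ` and `0` otherwise. -/
theorem card_colorings_fixed_by_rotation (m N : ℕ) (hm : 1 ≤ m) (hN : 1 ≤ N)
    (n : Fin m → ℕ) (hsum : ∑ j, n j = N) (c : ZMod N) (g : ℕ) (hg : addOrderOf c = g) :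
    Nat.card {f : ZMod N → Fin m // IsColoring N m n f ∧ ∀ x, f (x + c) = f x} =
      (if g ∣ Finset.univ.gcd n then
        Nat.multinomial Finset.univ (fun j => n j / g) else 0) := by
  classical
  subst hg
  haveI : NeZero N := ⟨by omega⟩
  set g := addOrderOf c with hgdef
  set H := AddSubgroup.zmultiples c with hH
  have hgcard : Nat.card H = g := Nat.card_zmultiples c
  have hgpos : 0 < g := addOrderOf_pos c
  have hNQ : N = Nat.card (ZMod N ⧸ H) * g := by
    rw [← hgcard, ← AddSubgroup.card_eq_card_quotient_mul_card_addSubgroup, Nat.card_zmod]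
  -- invariance under all of H
  have hext : ∀ (f : ZMod N → Fin m), (∀ x, f (x + c) = f x) →
      ∀ z ∈ H, ∀ x, f (x + z) = f x := by
    intro f hf z hz
    rw [hH, AddSubgroup.mem_zmultiples_iff] at hz
    obtain ⟨k, rfl⟩ := hz
    induction k using Int.induction_on with
    | zero => simp
    | succ k ih =>
      intro x
      have : x + (k + 1 : ℤ) • c = (x + (k : ℤ) • c) + c := by
        rw [add_smul, one_zsmul, add_assoc]
      rw [this, hf, ih]
    | pred k ih =>
      intro x
      have : (x + (-k - 1 : ℤ) • c) + c = x + (-k : ℤ) • c := by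
        rw [sub_smul, one_zsmul, add_assoc, sub_add_cancel]
      calc f (x + (-k - 1 : ℤ) • c) = f ((x + (-k - 1 : ℤ) • c) + c) := (hf _).symm
        _ = f x := by rw [this, ih]
  -- the equivalence with functions on the quotient
  let E : {f : ZMod N → Fin m // ∀ x, f (x + c) = f x} ≃ ((ZMod N ⧸ H) → Fin m) :=
  { toFun := fun f q => f.1 q.out
    invFun := fun F => ⟨fun x => F (QuotientAddGroup.mk x), fun x => by
      apply congrArg F
      rw [QuotientAddGroup.eq]
      have : -(x + c) + x = -c := by abel
      rw [this]
      exact neg_mem (AddSubgroup.mem_zmultiples c)⟩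
    left_inv := by
      rintro ⟨f, hf⟩
      apply Subtype.ext
      funext x
      simp only
      have h1 : (QuotientAddGroup.mk ((QuotientAddGroup.mk x : ZMod N ⧸ H).out) : ZMod N ⧸ H)
          = QuotientAddGroup.mk x := Quotient.out_eq' _
      rw [QuotientAddGroup.eq] at h1
      have := hext f hf _ h1 ((QuotientAddGroup.mk x : ZMod N ⧸ H).out)
      simpa using this.symm
    right_inv := by
      intro F
      funext q
      simp only
      congr 1
      exact Quotient.out_eq' q }
  -- fiber cardinality relation
  have hcard : ∀ (F : (ZMod N ⧸ H) → Fin m) (j : Fin m),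
      Nat.card {x : ZMod N // F (QuotientAddGroup.mk x) = j} =
        g * Nat.card {q : ZMod N ⧸ H // F q = j} := by
    intro F j
    have e1 : {x : ZMod N // F (QuotientAddGroup.mk x) = j} ≃
        (QuotientAddGroup.mk ⁻¹' (F ⁻¹' {j}) : Set (ZMod N)) :=
      Equiv.subtypeEquivRight (fun x => by simp)
    have e2 := QuotientAddGroup.preimageMkEquivAddSubgroupProdSet H (F ⁻¹' {j})
    have e3 : (F ⁻¹' {j} : Set (ZMod N ⧸ H)) ≃ {q : ZMod N ⧸ H // F q = j} :=
      Equiv.subtypeEquivRight (fun q => by simp)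
    rw [Nat.card_congr e1, Nat.card_congr e2, Nat.card_prod, hgcard, Nat.card_congr e3]
  -- key characterization of colorings through the equivalence
  have hchar : ∀ (f : {f : ZMod N → Fin m // ∀ x, f (x + c) = f x}),
      IsColoring N m n f.1 ↔ ∀ j, g * Nat.card {q : ZMod N ⧸ H // (E f) q = j} = n j := by
    intro f
    have hf1 : f.1 = fun x => (E f) (QuotientAddGroup.mk x) := by
      have := congrArg Subtype.val (E.left_inv f)
      exact this.symm
    constructor
    · intro hcol j
      rw [← hcard (E f) j, ← hcol j]
      congr 1
      rw [hf1]
    · intro hcol j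
      rw [← hcol j, ← hcard (E f) j]
      congr 1
      rw [hf1]
  by_cases hdvd : g ∣ Finset.univ.gcd n
  · rw [if_pos hdvd]
    have hdvdj : ∀ j, g ∣ n j := fun j => hdvd.trans (Finset.gcd_dvd (Finset.mem_univ j))
    -- the combined equivalence
    have e4 : {f : ZMod N → Fin m // IsColoring N m n f ∧ ∀ x, f (x + c) = f x} ≃
        {f : {f : ZMod N → Fin m // ∀ x, f (x + c) = f x} // IsColoring N m n f.1} :=
      ((Equiv.subtypeSubtypeEquivSubtypeInter _ _).trans
        (Equiv.subtypeEquivRight (fun f => and_comm))).symm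
    have e5 : {f : {f : ZMod N → Fin m // ∀ x, f (x + c) = f x} // IsColoring N m n f.1} ≃
        {F : (ZMod N ⧸ H) → Fin m // ∀ j, Nat.card {q : ZMod N ⧸ H // F q = j} = n j / g} := by
      refine Equiv.subtypeEquiv E (fun f => ?_)
      rw [hchar f]
      constructor
      · intro h j
        rw [← h j, Nat.mul_div_cancel_left _ hgpos]
      · intro h j
        rw [h j, Nat.mul_div_cancel' (hdvdj j)]
    rw [Nat.card_congr (e4.trans e5)]
    haveI : Fintype (ZMod N ⧸ H) := Fintype.ofFinite _
    have hk : ∑ j, n j / g = Fintype.card (ZMod N ⧸ H) := by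
      have h1 : g * ∑ j, n j / g = g * Fintype.card (ZMod N ⧸ H) := by
        rw [Finset.mul_sum]
        have : ∀ j ∈ Finset.univ, g * (n j / g) = n j :=
          fun j _ => Nat.mul_div_cancel' (hdvdj j)
        rw [Finset.sum_congr rfl this, hsum, ← Nat.card_eq_fintype_card]
        conv_lhs => rw [hNQ]
        ring
      exact Nat.eq_of_mul_eq_mul_left hgpos h1
    exact card_fiber_colorings m _ hk
  · rw [if_neg hdvd]
    rw [Nat.card_eq_zero]
    left
    constructor
    rintro ⟨f, hcol, hf⟩
    apply hdvd
    apply Finset.dvd_gcd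
    intro j _
    have := (hchar ⟨f, hf⟩).mp hcol j
    exact ⟨_, this.symm⟩
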